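/- With the notation of the doubling construction: if Γ is (G,5)-arc-transitive, then Δ is (X,3)-arc-transitive. -/

import Mathlib

namespace Doubling

variable {W : Type*}

/-- The arc set of a digraph is asymmetric (in particular loopless). -/
def IsDigraph {α : Type*} (B : α → α → Prop) : Prop := ∀ u v : α, B u v → ¬ B v u

/-- Connectivity of the underlying undirected graph. -/
def Connected {α : Type*} (B : α → α → Prop) : Prop :=
  ∀ u v : α, Relation.ReflTransGen (fun a b => B a b ∨ B b a) u v

/-- The underlying undirected graph is bipartite. -/
def Bipartite {α : Type*} (B : α → α → Prop) : Prop :=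
  ∃ S : Set α, ∀ u v : α, B u v → (u ∈ S ↔ v ∉ S)

/-- `G` consists of automorphisms of the digraph with arc set `B`. -/
def PreservesArcs {α : Type*} (B : α → α → Prop) (G : Subgroup (Equiv.Perm α)) : Prop :=
  ∀ g ∈ G, ∀ u v : α, B u v → B (g u) (g v)

/-- `G` is transitive on vertices. -/
def VertexTransitive {α : Type*} (G : Subgroup (Equiv.Perm α)) : Prop :=
  ∀ u v : α, ∃ g ∈ G, g u = v

/-- `p` is an `s`-arc of the digraph with arc set `B`. -/
def IsArcSeq {α : Type*} (B : α → α → Prop) (s : ℕ) (p : Fin (s + 1) → α) : Prop :=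
  ∀ i : Fin s, B (p i.castSucc) (p i.succ)

/-- `G` is transitive on the `s`-arcs of the digraph with arc set `B`. -/
def ArcTransitive {α : Type*} (B : α → α → Prop) (G : Subgroup (Equiv.Perm α)) (s : ℕ) : Prop :=
  ∀ p q : Fin (s + 1) → α, IsArcSeq B s p → IsArcSeq B s q →
    ∃ g ∈ G, ∀ i : Fin (s + 1), g (p i) = q i

/-- Every vertex of the digraph with arc set `B` has out-valency and in-valency `k`. -/
def Valency {α : Type*} (B : α → α → Prop) (k : ℕ) : Prop :=
  ∀ v : α, {w : α | B v w}.ncard = k ∧ {w : α | B w v}.ncard = k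

/-- The arc set of the doubling digraph `Γ` on `VΔ × VΔ × Z₂`:
`(v,w,0) → (v',w',1)` iff `v' = v` and `(w,w') ∈ AΔ`, and
`(v,w,1) → (v',w',0)` iff `(v,v') ∈ AΔ` and `w' = w`. -/
def doubleArc (B : W → W → Prop) :
    W × W × ZMod 2 → W × W × ZMod 2 → Prop :=
  fun u u' =>
    (u.2.2 = 0 ∧ u'.2.2 = 1 ∧ u'.1 = u.1 ∧ B u.2.1 u'.2.1) ∨
    (u.2.2 = 1 ∧ u'.2.2 = 0 ∧ B u.1 u'.1 ∧ u.2.1 = u'.2.1)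

/-- The permutation `(x,y) : (v,w,δ) ↦ (v^x, w^y, δ)` of `VΔ × VΔ × Z₂`. -/
def pairPerm (x y : Equiv.Perm W) : Equiv.Perm (W × W × ZMod 2) :=
  Equiv.prodCongr x (Equiv.prodCongr y (Equiv.refl (ZMod 2)))

/-- The embedding of `Sym(VΔ) × Sym(VΔ)` into `Sym(VΔ × VΔ × Z₂)`. -/
def pairHom : Equiv.Perm W × Equiv.Perm W →* Equiv.Perm (W × W × ZMod 2) where
  toFun p := pairPerm p.1 p.2
  map_one' := by
    ext u <;> simp [pairPerm]
  map_mul' a b := by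
    ext u <;> simp [pairPerm]

/-- The permutation `τ : (v,w,δ) ↦ (w,v,δ+1)` of `VΔ × VΔ × Z₂`. -/
def tauPerm : Equiv.Perm (W × W × ZMod 2) where
  toFun u := (u.2.1, u.1, u.2.2 + 1)
  invFun u := (u.2.1, u.1, u.2.2 + 1)
  left_inv := by
    have h : ∀ z : ZMod 2, z + 1 + 1 = z := by decide
    intro u
    simp [h]
  right_inv := by
    have h : ∀ z : ZMod 2, z + 1 + 1 = z := by decide
    intro u
    simp [h]

/-- The permutation `t = (g,1)τ : (v,w,δ) ↦ (w, v^g, δ+1)`. -/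
def tPerm (g : Equiv.Perm W) : Equiv.Perm (W × W × ZMod 2) :=
  tauPerm * pairPerm g 1

/-- The group `G⁺ = X × X` acting coordinatewise on `VΔ × VΔ × Z₂`. -/
def doubleGroupPlus (X : Subgroup (Equiv.Perm W)) : Subgroup (Equiv.Perm (W × W × ZMod 2)) :=
  Subgroup.map pairHom (X.prod X)

/-- The group `G = ⟨G⁺, t⟩`. -/
def doubleGroup (X : Subgroup (Equiv.Perm W)) (g : Equiv.Perm W) :
    Subgroup (Equiv.Perm (W × W × ZMod 2)) :=
  doubleGroupPlus X ⊔ Subgroup.closure {tPerm g}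

/-- The subgroup of permutations of `VΔ × VΔ × Z₂` that either act coordinatewise by
elements of `X` preserving the level, or swap coordinates via elements of `X` and shift
the level. -/
def goodSubgroup (X : Subgroup (Equiv.Perm W)) : Subgroup (Equiv.Perm (W × W × ZMod 2)) where
  carrier := {γ | (∃ x ∈ X, ∃ y ∈ X, ∀ u, γ u = (x u.1, y u.2.1, u.2.2)) ∨
                  (∃ x ∈ X, ∃ y ∈ X, ∀ u, γ u = (x u.2.1, y u.1, u.2.2 + 1))}
  one_mem' := Or.inl ⟨1, X.one_mem, 1, X.one_mem, fun u => rfl⟩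
  mul_mem' := by
    have hz : ∀ z : ZMod 2, z + 1 + 1 = z := by decide
    rintro a b (⟨x1, hx1, y1, hy1, h1⟩ | ⟨x1, hx1, y1, hy1, h1⟩)
      (⟨x2, hx2, y2, hy2, h2⟩ | ⟨x2, hx2, y2, hy2, h2⟩)
    · exact Or.inl ⟨x1 * x2, X.mul_mem hx1 hx2, y1 * y2, X.mul_mem hy1 hy2,
        fun u => by simp [Equiv.Perm.mul_apply, h1, h2]⟩
    · exact Or.inr ⟨x1 * x2, X.mul_mem hx1 hx2, y1 * y2, X.mul_mem hy1 hy2,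
        fun u => by simp [Equiv.Perm.mul_apply, h1, h2]⟩
    · exact Or.inr ⟨x1 * y2, X.mul_mem hx1 hy2, y1 * x2, X.mul_mem hy1 hx2,
        fun u => by simp [Equiv.Perm.mul_apply, h1, h2]⟩
    · exact Or.inl ⟨x1 * y2, X.mul_mem hx1 hy2, y1 * x2, X.mul_mem hy1 hx2,
        fun u => by simp [Equiv.Perm.mul_apply, h1, h2, hz]⟩
  inv_mem' := by
    have hz : ∀ z : ZMod 2, z + 1 + 1 = z := by decide
    rintro a (⟨x, hx, y, hy, h⟩ | ⟨x, hx, y, hy, h⟩)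
    · refine Or.inl ⟨x⁻¹, X.inv_mem hx, y⁻¹, X.inv_mem hy, fun u => ?_⟩
      apply a.injective
      rw [show a (a⁻¹ u) = u from Equiv.apply_symm_apply a u, h]
      simp
    · refine Or.inr ⟨y⁻¹, X.inv_mem hy, x⁻¹, X.inv_mem hx, fun u => ?_⟩
      apply a.injective
      rw [show a (a⁻¹ u) = u from Equiv.apply_symm_apply a u, h]
      simp [hz]

lemma doubleGroup_le_good (X : Subgroup (Equiv.Perm W)) (g : Equiv.Perm W) (hg : g ∈ X) :
    doubleGroup X g ≤ goodSubgroup X := by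
  apply sup_le
  · rintro γ ⟨⟨x, y⟩, ⟨hx, hy⟩, rfl⟩
    exact Or.inl ⟨x, hx, y, hy, fun u => rfl⟩
  · rw [Subgroup.closure_le]
    rintro γ (rfl : γ = tPerm g)
    exact Or.inr ⟨1, X.one_mem, g, hg, fun u => rfl⟩

theorem doubling_five_arc_transitive_input_three
    [Finite W] (B : W → W → Prop) (X : Subgroup (Equiv.Perm W)) (s k : ℕ)
    (v₀ v₁ : W) (g : Equiv.Perm W)
    (hdig : IsDigraph B) (hk : 2 ≤ k) (hval : Valency B k)
    (hAut : PreservesArcs B X) (hvt : VertexTransitive X)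
    (hs : 2 ≤ s) (hat : ArcTransitive B X s)
    (harc : B v₀ v₁) (hg : g ∈ X) (hgv : g v₀ = v₁)
    -- if Γ is (G,5)-arc-transitive
    (h5 : ArcTransitive (doubleArc B) (doubleGroup X g) 5) :
    -- then Δ is (X,3)-arc-transitive
    ArcTransitive B X 3 := by
  intro p q hp hq
  -- obtain a vertex `a₂` with `B v₁ a₂`
  obtain ⟨a₂, ha₂⟩ : {w : W | B v₁ w}.Nonempty := by
    apply Set.nonempty_of_ncard_ne_zero
    rw [(hval v₁).1]
    omega
  have hp0 : B (p 0) (p 1) := hp 0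
  have hp1 : B (p 1) (p 2) := hp 1
  have hp2 : B (p 2) (p 3) := hp 2
  have hq0 : B (q 0) (q 1) := hq 0
  have hq1 : B (q 1) (q 2) := hq 1
  have hq2 : B (q 2) (q 3) := hq 2
  -- build the two 5-arcs in Γ
  set P : Fin 6 → W × W × ZMod 2 :=
    ![(v₀, p 0, 0), (v₀, p 1, 1), (v₁, p 1, 0), (v₁, p 2, 1), (a₂, p 2, 0), (a₂, p 3, 1)]
    with hP
  set Q : Fin 6 → W × W × ZMod 2 :=
    ![(v₀, q 0, 0), (v₀, q 1, 1), (v₁, q 1, 0), (v₁, q 2, 1), (a₂, q 2, 0), (a₂, q 3, 1)]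
    with hQ
  have hPa : IsArcSeq (doubleArc B) 5 P := by
    intro i
    fin_cases i
    · exact Or.inl ⟨rfl, rfl, rfl, hp0⟩
    · exact Or.inr ⟨rfl, rfl, harc, rfl⟩
    · exact Or.inl ⟨rfl, rfl, rfl, hp1⟩
    · exact Or.inr ⟨rfl, rfl, ha₂, rfl⟩
    · exact Or.inl ⟨rfl, rfl, rfl, hp2⟩
  have hQa : IsArcSeq (doubleArc B) 5 Q := by
    intro i
    fin_cases i
    · exact Or.inl ⟨rfl, rfl, rfl, hq0⟩
    · exact Or.inr ⟨rfl, rfl, harc, rfl⟩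
    · exact Or.inl ⟨rfl, rfl, rfl, hq1⟩
    · exact Or.inr ⟨rfl, rfl, ha₂, rfl⟩
    · exact Or.inl ⟨rfl, rfl, rfl, hq2⟩
  obtain ⟨γ, hγG, hγ⟩ := h5 P Q hPa hQa
  rcases doubleGroup_le_good X g hg hγG with ⟨x, hx, y, hy, h⟩ | ⟨x, hx, y, hy, h⟩
  · refine ⟨y, hy, fun i => ?_⟩
    have h0 : (x v₀, y (p 0), (0 : ZMod 2)) = (v₀, q 0, (0 : ZMod 2)) := (h (P 0)) ▸ hγ 0
    have h1 : (x v₀, y (p 1), (1 : ZMod 2)) = (v₀, q 1, (1 : ZMod 2)) := (h (P 1)) ▸ hγ 1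
    have h3 : (x v₁, y (p 2), (1 : ZMod 2)) = (v₁, q 2, (1 : ZMod 2)) := (h (P 3)) ▸ hγ 3
    have h5' : (x a₂, y (p 3), (1 : ZMod 2)) = (a₂, q 3, (1 : ZMod 2)) := (h (P 5)) ▸ hγ 5
    rw [Prod.mk.injEq, Prod.mk.injEq] at h0 h1 h3 h5'
    fin_cases i
    · exact h0.2.1
    · exact h1.2.1
    · exact h3.2.1
    · exact h5'.2.1
  · exfalso
    have h0 : (x (p 0), y v₀, (0 : ZMod 2) + 1) = (v₀, q 0, (0 : ZMod 2)) := (h (P 0)) ▸ hγ 0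
    have : (0 : ZMod 2) + 1 = 0 := congrArg (fun u => u.2.2) h0
    simp at this

end Doubling
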